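/- Let S be a set, μ an ultrafilter on S, and (M_s) a family of nonempty complete metric spaces of diameter ≤ k. The metric ultraproduct ∏ M_s/∼ (with distance the ultralimit of fibrewise distances) is canonically isometric to the directed colimit over U ∈ μ (ordered by reverse inclusion) of the sup-metric products ∏_{s∈U} M_s, computed in the category of complete metric spaces of diameter ≤ k with 1-Lipschitz maps. -/
import Mathlib

open Set Filter

section UltraAux

variable {S : Type*} {M : S → Type*} [∀ s, MetricSpace (M s)]

noncomputable def supd (f g : ∀ s, M s) (U : Set S) : ℝ :=
  ⨆ s : U, dist (f s.1) (g s.1)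

variable {k : ℝ}

lemma supd_bddAbove (hk : ∀ (s : S) (x y : M s), dist x y ≤ k) (f g : ∀ s, M s) (U : Set S) :
    BddAbove (Set.range fun s : U => dist (f s.1) (g s.1)) :=
  ⟨k, by rintro x ⟨t, rfl⟩; exact hk _ _ _⟩

lemma dist_le_supd (hk : ∀ (s : S) (x y : M s), dist x y ≤ k) (f g : ∀ s, M s) {U : Set S}
    {s : S} (hs : s ∈ U) : dist (f s) (g s) ≤ supd f g U :=
  le_ciSup (supd_bddAbove hk f g U) ⟨s, hs⟩

lemma supd_nonneg (hk : ∀ (s : S) (x y : M s), dist x y ≤ k) (f g : ∀ s, M s) {U : Set S}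
    (hU : U.Nonempty) : 0 ≤ supd f g U :=
  dist_nonneg.trans (dist_le_supd hk f g hU.choose_spec)

lemma supd_le (f g : ∀ s, M s) {U : Set S} (hU : U.Nonempty) {c : ℝ}
    (h : ∀ s ∈ U, dist (f s) (g s) ≤ c) : supd f g U ≤ c := by
  haveI : Nonempty U := hU.to_subtype
  exact ciSup_le fun s => h s.1 s.2

lemma supd_mono (hk : ∀ (s : S) (x y : M s), dist x y ≤ k) (f g : ∀ s, M s) {U V : Set S}
    (hUV : U ⊆ V) (hU : U.Nonempty) : supd f g U ≤ supd f g V :=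
  supd_le f g hU fun s hs => dist_le_supd hk f g (hUV hs)

variable (μ : Ultrafilter S)

noncomputable def Dinf (f g : ∀ s, M s) : ℝ :=
  ⨅ U : {U : Set S // U ∈ μ}, supd f g U.1

instance : Nonempty {U : Set S // U ∈ μ} := ⟨⟨Set.univ, univ_mem⟩⟩

lemma mem_nonempty {U : Set S} (hU : U ∈ μ) : U.Nonempty :=
  Filter.nonempty_of_mem (f := (μ : Filter S)) hU

lemma Dinf_bddBelow (hk : ∀ (s : S) (x y : M s), dist x y ≤ k) (f g : ∀ s, M s) :
    BddBelow (Set.range fun U : {U : Set S // U ∈ μ} => supd f g U.1) :=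
  ⟨0, by rintro x ⟨U, rfl⟩; exact supd_nonneg hk f g (mem_nonempty μ U.2)⟩

lemma Dinf_le (hk : ∀ (s : S) (x y : M s), dist x y ≤ k) {U : Set S} (hU : U ∈ μ) (f g : ∀ s, M s) : Dinf μ f g ≤ supd f g U :=
  ciInf_le (Dinf_bddBelow μ hk f g) ⟨U, hU⟩

lemma Dinf_nonneg (hk : ∀ (s : S) (x y : M s), dist x y ≤ k) (f g : ∀ s, M s) : 0 ≤ Dinf μ f g :=
  le_ciInf fun U => supd_nonneg hk f g (mem_nonempty μ U.2)

lemma Dinf_lt {f g : ∀ s, M s} {ε : ℝ} (h : Dinf μ f g < ε) :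
    ∃ U ∈ μ, supd f g U < ε := by
  obtain ⟨U, hU⟩ := exists_lt_of_ciInf_lt h
  exact ⟨U.1, U.2, hU⟩

lemma Dinf_triangle (hk : ∀ (s : S) (x y : M s), dist x y ≤ k) (f g h : ∀ s, M s) : Dinf μ f h ≤ Dinf μ f g + Dinf μ g h := by
  refine le_of_forall_pos_le_add fun ε hε => ?_
  obtain ⟨U, hUμ, hU⟩ := Dinf_lt μ (show Dinf μ f g < Dinf μ f g + ε/2 by linarith)
  obtain ⟨V, hVμ, hV⟩ := Dinf_lt μ (show Dinf μ g h < Dinf μ g h + ε/2 by linarith)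
  have hWne : (U ∩ V).Nonempty := mem_nonempty μ (inter_mem hUμ hVμ)
  calc Dinf μ f h ≤ supd f h (U ∩ V) := Dinf_le μ hk (inter_mem hUμ hVμ) f h
    _ ≤ supd f g (U ∩ V) + supd g h (U ∩ V) := by
        refine supd_le f h hWne fun s hs => (dist_triangle (f s) (g s) (h s)).trans ?_
        exact add_le_add (dist_le_supd hk f g hs) (dist_le_supd hk g h hs)
    _ ≤ supd f g U + supd g h V :=
        add_le_add (supd_mono hk f g inter_subset_left hWne)
          (supd_mono hk g h inter_subset_right hWne)
    _ ≤ Dinf μ f g + Dinf μ g h + ε := by linarith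

lemma geom_chain {α : Type*} [PseudoMetricSpace α] (w : ℕ → α) (n : ℕ) :
    ∀ m, n ≤ m → (∀ i, n ≤ i → i < m → dist (w i) (w (i+1)) ≤ (1/2)^i) →
      dist (w n) (w m) ≤ 2*(1/2)^n - 2*(1/2)^m := by
  intro m
  induction m with
  | zero => intro h _; obtain rfl : n = 0 := Nat.le_zero.mp h; simp
  | succ m ih =>
    intro hnm hd
    rcases eq_or_lt_of_le hnm with h | h
    · rw [← h]; simp
    · have hnm' : n ≤ m := Nat.lt_succ_iff.mp h
      have h1 := ih hnm' fun i hi hi' => hd i hi (Nat.lt_succ_of_lt hi')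
      have h2 := hd m hnm' (Nat.lt_succ_self m)
      have h3 : (2:ℝ)*(1/2)^(m+1) = (1/2)^m := by ring
      calc dist (w n) (w (m+1)) ≤ dist (w n) (w m) + dist (w m) (w (m+1)) :=
            dist_triangle _ _ _
        _ ≤ 2*(1/2)^n - 2*(1/2)^(m+1) := by rw [pow_succ] at *; linarith

end UltraAux


/-- An element of the directed colimit (over `U ∈ μ`, ordered by reverse inclusion) of the
sup-metric products `∏_{s ∈ U} M s`: a set `U ∈ μ` together with a family over `U`. -/
def UltraColim {S : Type*} (μ : Ultrafilter S) (M : S → Type*) :=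
  Σ U : {U : Set S // U ∈ μ}, ∀ s : U.1, M s.1

/-- The metric ultraproduct `∏ M_s / ∼` (with the ultralimit distance `D`) is canonically
isometric to the directed colimit over `U ∈ μ` of the sup-metric products `∏_{s∈U} M s`,
computed in the category of `k`-bounded complete metric spaces with `1`-Lipschitz maps:
the colimit is obtained from the set-level colimit, equipped with the infimum pseudometric
`ρ`, by identifying points at distance zero and completing.  Concretely: there is a map `Φ`
extending each partial family, which is isometric from `(UltraColim, ρ)` to `(∏ M_s, D)`,
whose image meets every `∼`-class (so no completion is needed: the ultraproduct is already
complete). -/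
theorem stmt_9 {S : Type*} (μ : Ultrafilter S) (M : S → Type*)
    [∀ s, MetricSpace (M s)] [∀ s, Nonempty (M s)] [∀ s, CompleteSpace (M s)] (k : ℝ)
    (hk : ∀ (s : S) (x y : M s), dist x y ≤ k)
    (rel : (∀ s, M s) → (∀ s, M s) → Prop)
    (hrel : rel = fun f g => ∀ ε > 0, {s | dist (f s) (g s) < ε} ∈ μ)
    (D : (∀ s, M s) → (∀ s, M s) → ℝ)
    (hD : D = fun f g => ⨅ U : {U : Set S // U ∈ μ}, ⨆ s : U.1, dist (f s.1) (g s.1))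
    (ρ : UltraColim μ M → UltraColim μ M → ℝ)
    (hρ : ρ = fun p q => ⨅ W : {W : Set S // W ∈ μ ∧ W ⊆ p.1.1 ∩ q.1.1},
      ⨆ s : W.1, dist (p.2 ⟨s.1, (W.2.2 s.2).1⟩) (q.2 ⟨s.1, (W.2.2 s.2).2⟩)) :
    ∃ Φ : UltraColim μ M → ∀ s, M s,
      (∀ p : UltraColim μ M, ∀ s : p.1.1, Φ p s.1 = p.2 s) ∧
      (∀ p q, D (Φ p) (Φ q) = ρ p q) ∧
      (∀ f : ∀ s, M s, ∃ p, rel (Φ p) f) ∧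
      (∀ u : ℕ → ∀ s, M s,
        (∀ ε > 0, ∃ N, ∀ m ≥ N, ∀ n ≥ N, D (u m) (u n) < ε) →
        ∃ g, ∀ ε > 0, ∃ N, ∀ n ≥ N, D (u n) g < ε) := by
  classical
  have hDD : ∀ f g, D f g = Dinf μ f g := by intro f g; rw [hD]; rfl
  refine ⟨fun p s => if h : s ∈ p.1.1 then p.2 ⟨s, h⟩ else Classical.arbitrary (M s),
    ?_, ?_, ?_, ?_⟩
  · intro p s
    simp [s.2]
  · -- isometry onto ρ
    intro p q
    set Φ : UltraColim μ M → ∀ s, M s :=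
      fun p s => if h : s ∈ p.1.1 then p.2 ⟨s, h⟩ else Classical.arbitrary (M s) with hΦ
    have hterm : ∀ W : {W : Set S // W ∈ μ ∧ W ⊆ p.1.1 ∩ q.1.1},
        (⨆ s : W.1, dist (p.2 ⟨s.1, (W.2.2 s.2).1⟩) (q.2 ⟨s.1, (W.2.2 s.2).2⟩))
          = supd (Φ p) (Φ q) W.1 := by
      intro W
      refine iSup_congr fun s => ?_
      simp only [hΦ, supd, dif_pos (W.2.2 s.2).1, dif_pos (W.2.2 s.2).2]
    have hρΦ : ρ p q = ⨅ W : {W : Set S // W ∈ μ ∧ W ⊆ p.1.1 ∩ q.1.1},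
        supd (Φ p) (Φ q) W.1 := by
      rw [hρ]; exact iInf_congr hterm
    haveI : Nonempty {W : Set S // W ∈ μ ∧ W ⊆ p.1.1 ∩ q.1.1} :=
      ⟨⟨p.1.1 ∩ q.1.1, inter_mem p.1.2 q.1.2, subset_rfl⟩⟩
    rw [hDD, hρΦ]
    apply le_antisymm
    · exact le_ciInf fun W => Dinf_le μ hk W.2.1 (Φ p) (Φ q)
    · refine le_ciInf fun U => ?_
      have hWμ : U.1 ∩ (p.1.1 ∩ q.1.1) ∈ μ := inter_mem U.2 (inter_mem p.1.2 q.1.2)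
      calc (⨅ W : {W : Set S // W ∈ μ ∧ W ⊆ p.1.1 ∩ q.1.1}, supd (Φ p) (Φ q) W.1)
          ≤ supd (Φ p) (Φ q) (U.1 ∩ (p.1.1 ∩ q.1.1)) := by
            have hbdd : BddBelow (Set.range
                fun W : {W : Set S // W ∈ μ ∧ W ⊆ p.1.1 ∩ q.1.1} => supd (Φ p) (Φ q) W.1) := by
              refine ⟨0, ?_⟩
              rintro x ⟨W, rfl⟩
              exact supd_nonneg hk _ _ (mem_nonempty μ W.2.1)
            exact ciInf_le hbdd ⟨U.1 ∩ (p.1.1 ∩ q.1.1), hWμ, inter_subset_right⟩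
        _ ≤ supd (Φ p) (Φ q) U.1 :=
            supd_mono hk _ _ inter_subset_left (mem_nonempty μ hWμ)
  · -- image meets every class
    intro f
    refine ⟨⟨⟨Set.univ, univ_mem⟩, fun s => f s.1⟩, ?_⟩
    rw [hrel]
    intro ε hε
    refine Filter.mem_of_superset Filter.univ_mem fun s _ => ?_
    simp [hε]
  · -- completeness
    intro u hu
    simp only [hDD] at *
    have hhalf : ∀ i : ℕ, (0:ℝ) < (1/2)^i := fun i => by positivity
    choose N hN using fun i : ℕ => hu ((1/2)^i) (hhalf i)
    set φ : ℕ → ℕ := fun i => (Finset.range (i+1)).sup N with hφ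
    have φmono : Monotone φ := fun i j hij =>
      Finset.sup_mono (Finset.range_subset_range.mpr (by omega))
    have key : ∀ i, ∀ m ≥ φ i, ∀ n ≥ φ i, Dinf μ (u m) (u n) < (1/2)^i := by
      intro i m hm n hn
      have hNφ : N i ≤ φ i := Finset.le_sup (Finset.self_mem_range_succ i)
      exact hN i m (le_trans hNφ hm) n (le_trans hNφ hn)
    have step : ∀ i, Dinf μ (u (φ i)) (u (φ (i+1))) < (1/2)^i := fun i =>
      key i _ le_rfl _ (φmono (Nat.le_succ i))
    choose U hUμ hUsup using fun i => Dinf_lt μ (step i)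
    set T : ℕ → Set S := fun n => ⋂ i ∈ Finset.range n, U i with hT
    have hTμ : ∀ n, T n ∈ μ := fun n =>
      (Filter.biInter_finset_mem _).2 fun i _ => hUμ i
    have hTmem : ∀ n s, s ∈ T n ↔ ∀ i < n, s ∈ U i := by
      intro n s; simp [hT, Set.mem_iInter]
    have hstep : ∀ i s, s ∈ U i → dist (u (φ i) s) (u (φ (i+1)) s) ≤ (1/2)^i :=
      fun i s hs => (dist_le_supd hk _ _ hs).trans (hUsup i).le
    have exlim : ∀ s, (∀ i, s ∈ U i) →
        ∃ l : M s, Tendsto (fun i => u (φ i) s) atTop (nhds l) := by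
      intro s hs
      apply cauchySeq_tendsto_of_complete
      apply cauchySeq_of_le_geometric (1/2) 1 (by norm_num)
      intro i
      simpa using hstep i s (hs i)
    set g : ∀ s, M s := fun s =>
      if h : ∀ i, s ∈ U i then (exlim s h).choose
      else u (φ (Nat.find (not_forall.mp h))) s with hg
    have hgbound : ∀ n, Dinf μ (u (φ n)) g ≤ 2*(1/2)^n := by
      intro n
      refine (Dinf_le μ hk (hTμ n) _ _).trans
        (supd_le _ _ (mem_nonempty μ (hTμ n)) ?_)
      intro s hs
      by_cases h : ∀ i, s ∈ U i
      · have hl := (exlim s h).choose_spec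
        have hgs : g s = (exlim s h).choose := by rw [hg]; simp [h]
        rw [hgs]
        refine le_of_tendsto (tendsto_const_nhds.dist hl) ?_
        filter_upwards [eventually_ge_atTop n] with j hj
        have := geom_chain (fun i => u (φ i) s) n j hj
          (fun i _ _ => hstep i s (h i))
        have h2 : (0:ℝ) ≤ 2*(1/2)^j := by positivity
        linarith
      · have hgs : g s = u (φ (Nat.find (not_forall.mp h))) s := by rw [hg]; simp [h]
        rw [hgs]
        set m := Nat.find (not_forall.mp h) with hm
        have hnm : n ≤ m := by
          by_contra hc
          push_neg at hc
          exact Nat.find_spec (not_forall.mp h) ((hTmem n s).mp hs m hc)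
        have hmem : ∀ i, i < m → s ∈ U i := fun i hi => by
          by_contra hc
          exact absurd (Nat.find_min (not_forall.mp h) hi) (by simp [hc])
        have := geom_chain (fun i => u (φ i) s) n m hnm
          (fun i _ hi' => hstep i s (hmem i hi'))
        have h2 : (0:ℝ) ≤ 2*(1/2)^m := by positivity
        linarith
    refine ⟨g, ?_⟩
    intro ε hε
    obtain ⟨j, hj⟩ : ∃ j : ℕ, (1/2:ℝ)^j < ε/3 :=
      exists_pow_lt_of_lt_one (by linarith) (by norm_num)
    refine ⟨φ j, fun n hn => ?_⟩
    have h1 : Dinf μ (u n) (u (φ j)) < (1/2)^j := key j n hn (φ j) le_rfl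
    have h2 := hgbound j
    calc Dinf μ (u n) g ≤ Dinf μ (u n) (u (φ j)) + Dinf μ (u (φ j)) g :=
          Dinf_triangle μ hk _ _ _
      _ < ε := by linarith
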